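/- Let T be a transitive nonabelian simple subgroup of Sym(Q) with trivial centraliser in Sym(Q) and suppose T acts primitively on Q with |Q| = q. Let Γ(J) = H(r,q) and let D = Diag_r(T) = {(t,…,t) : t ∈ T} ≤ Sym(Q)^r. Then the normaliser of D in Aut(Γ(J)) = Sym(Q) wr Sym(Fin r) equals Diag_r(N_{Sym(Q)}(T)) ⋊ Sym(Fin r). -/

import Mathlib

/-- The automorphism of `H(r,q)` determined by `h ∈ Sym(Q)^r`, `σ ∈ Sym(Fin r)`. -/
def hammAut {r : ℕ} {Q : Type*} (h : Fin r → Equiv.Perm Q) (σ : Equiv.Perm (Fin r)) :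
    Equiv.Perm (Fin r → Q) :=
  (Equiv.piCongrRight h).trans (Equiv.arrowCongr σ (Equiv.refl Q))

lemma hammAut_apply {r : ℕ} {Q : Type*} (h : Fin r → Equiv.Perm Q) (σ : Equiv.Perm (Fin r))
    (x : Fin r → Q) (i : Fin r) : hammAut h σ x i = h (σ.symm i) (x (σ.symm i)) := rfl

lemma hammAut_inv_apply {r : ℕ} {Q : Type*} (h : Fin r → Equiv.Perm Q) (σ : Equiv.Perm (Fin r))
    (x : Fin r → Q) (i : Fin r) : (hammAut h σ)⁻¹ x i = (h i).symm (x (σ i)) := rfl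

/-- Conjugation of a diagonal element. -/
lemma hammAut_conj {r : ℕ} {Q : Type*} (h : Fin r → Equiv.Perm Q) (σ : Equiv.Perm (Fin r))
    (t : Equiv.Perm Q) (x : Fin r → Q) (i : Fin r) :
    ((hammAut h σ * hammAut (fun _ => t) 1 * (hammAut h σ)⁻¹ : Equiv.Perm (Fin r → Q))) x i
      = h (σ.symm i) (t ((h (σ.symm i)).symm (x i))) := by
  simp only [Equiv.Perm.mul_apply, hammAut_apply, hammAut_inv_apply]
  simp [Equiv.Perm.one_symm, Equiv.Perm.one_apply]

lemma hammAut_conj' {r : ℕ} {Q : Type*} (h : Fin r → Equiv.Perm Q) (σ : Equiv.Perm (Fin r))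
    (t : Equiv.Perm Q) (x : Fin r → Q) (i : Fin r) :
    (((hammAut h σ)⁻¹ * hammAut (fun _ => t) 1 * hammAut h σ : Equiv.Perm (Fin r → Q))) x i
      = (h i).symm (t (h i (x i))) := by
  simp only [Equiv.Perm.mul_apply, hammAut_apply, hammAut_inv_apply]
  simp [Equiv.Perm.one_symm, Equiv.Perm.one_apply]

/-- Let `T` be a transitive nonabelian simple primitive subgroup of `Sym(Q)` with trivial
centraliser.  The normaliser of `Diag_r(T)` in `Aut(H(r,q)) = Sym(Q) wr Sym(Fin r)`
equals `Diag_r(N_{Sym(Q)}(T)) ⋊ Sym(Fin r)`: an element `hσ` normalises the diagonal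
iff `h` is constant with value in `N_{Sym(Q)}(T)`. -/
theorem stmt_18 {Q : Type*} [Fintype Q] [DecidableEq Q] {q r : ℕ}
    (hq : Fintype.card Q = q) (hr : 0 < r)
    (T : Subgroup (Equiv.Perm Q))
    (hsimple : IsSimpleGroup ↥T) (hnonab : ¬ ∀ a b : ↥T, a * b = b * a)
    (htrans : ∀ x y : Q, ∃ t ∈ T, t x = y)
    (hcent : ∀ g : Equiv.Perm Q, (∀ t ∈ T, g * t = t * g) → g = 1)
    (hprim : ∀ B : Set Q, MulAction.IsBlock ↥T B → B.Subsingleton ∨ B = Set.univ)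
    (h : Fin r → Equiv.Perm Q) (σ : Equiv.Perm (Fin r)) :
    let D : Set (Equiv.Perm (Fin r → Q)) :=
      {y | ∃ t ∈ T, y = hammAut (fun _ => t) 1}
    ((∀ d ∈ D, hammAut h σ * d * (hammAut h σ)⁻¹ ∈ D ∧
        (hammAut h σ)⁻¹ * d * hammAut h σ ∈ D) ↔
      ∃ n ∈ Subgroup.normalizer T, ∀ i, h i = n) := by
  intro D
  set i0 : Fin r := ⟨0, hr⟩ with hi0
  constructor
  · intro H
    have key : ∀ t ∈ T, ∃ s ∈ T, ∀ j, h j * t * (h j)⁻¹ = s := by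
      intro t ht
      obtain ⟨⟨s, hs, hseq⟩, -⟩ := H (hammAut (fun _ => t) 1) ⟨t, ht, rfl⟩
      refine ⟨s, hs, fun j => ?_⟩
      ext a
      have : (hammAut h σ * hammAut (fun _ => t) 1 * (hammAut h σ)⁻¹ : Equiv.Perm (Fin r → Q)) (fun _ => a) (σ j)
          = hammAut (fun _ => s) 1 (fun _ => a) (σ j) := by rw [hseq]
      rw [hammAut_conj] at this
      simp only [Equiv.symm_apply_apply, hammAut_apply] at this
      simpa [Equiv.Perm.mul_apply, Equiv.Perm.inv_def] using this
    have key' : ∀ t ∈ T, ∃ s ∈ T, ∀ j, (h j)⁻¹ * t * h j = s := by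
      intro t ht
      obtain ⟨-, ⟨s, hs, hseq⟩⟩ := H (hammAut (fun _ => t) 1) ⟨t, ht, rfl⟩
      refine ⟨s, hs, fun j => ?_⟩
      ext a
      have : ((hammAut h σ)⁻¹ * hammAut (fun _ => t) 1 * hammAut h σ : Equiv.Perm (Fin r → Q)) (fun _ => a) j
          = hammAut (fun _ => s) 1 (fun _ => a) j := by rw [hseq]
      rw [hammAut_conj'] at this
      simp only [hammAut_apply] at this
      simpa [Equiv.Perm.mul_apply, Equiv.Perm.inv_def] using this
    refine ⟨h i0, ?_, ?_⟩
    · rw [Subgroup.mem_normalizer_iff]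
      intro t
      constructor
      · intro ht
        obtain ⟨s, hs, hj⟩ := key t ht
        rw [hj i0]; exact hs
      · intro ht
        obtain ⟨s, hs, hj⟩ := key' _ ht
        have heq : t = s := by
          rw [← hj i0]; group
        rw [heq]; exact hs
    · intro i
      have hc : ∀ t ∈ T, ((h i0)⁻¹ * h i) * t = t * ((h i0)⁻¹ * h i) := by
        intro t ht
        obtain ⟨s, hs, hj⟩ := key t ht
        have heq : h i * t * (h i)⁻¹ = h i0 * t * (h i0)⁻¹ := by rw [hj i, hj i0]
        have := congrArg (fun z => (h i0)⁻¹ * z * h i) heq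
        simpa [mul_assoc] using this
      have h1 : h i = h i0 * (((h i0)⁻¹ * h i)) := by group
      rw [h1, hcent _ hc, mul_one]
  · rintro ⟨n, hn, hconst⟩
    rintro d ⟨t, ht, rfl⟩
    constructor
    · refine ⟨n * t * n⁻¹, (Subgroup.mem_normalizer_iff.mp hn t).mp ht, ?_⟩
      ext x i
      rw [hammAut_conj, hconst, hammAut_apply]
      simp [Equiv.Perm.mul_apply, Equiv.Perm.inv_def, Equiv.Perm.one_symm, Equiv.Perm.one_apply]
    · refine ⟨n⁻¹ * t * n, ?_, ?_⟩
      · have := (Subgroup.mem_normalizer_iff.mp (Subgroup.inv_mem _ hn) t).mp ht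
        simpa using this
      · ext x i
        rw [hammAut_conj', hconst, hammAut_apply]
        simp [Equiv.Perm.mul_apply, Equiv.Perm.inv_def, Equiv.Perm.one_symm, Equiv.Perm.one_apply]
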